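/- Let (u_i)_{i∈ℕ} be a sequence dense in W_G for the graph norm, and for each m ∈ ℕ define the Galerkin gradient discretisation 𝒟_m = (X_{𝒟_m}, P_{𝒟_m}, G_{𝒟_m}) where X_{𝒟_m} = span(u_0, …, u_m), P_{𝒟_m} u = u, and G_{𝒟_m} u = Gu. Then the sequence (𝒟_m)_{m∈ℕ} is coercive, limit-conforming and consistent; if moreover the embedding of W_G (with the graph norm) into L is compact, then (𝒟_m)_{m∈ℕ} is also compact. -/

import Mathlib

open NormedSpace Filter Topology

noncomputable section

variable {L Lv : Type*} [NormedAddCommGroup L] [NormedSpace ℝ L]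
  [NormedAddCommGroup Lv] [NormedSpace ℝ Lv]

/-- The seminorm `|u|_{L,V} = sup_{μ ∈ V \ {0}} |⟨μ,u⟩| / ‖μ‖` (equal to `0` when `V = {0}`,
since `sSup ∅ = 0` in `ℝ`). -/
noncomputable def semV (V : Submodule ℝ (StrongDual ℝ L)) (u : L) : ℝ :=
  sSup ((fun μ : StrongDual ℝ L => |μ u| / ‖μ‖) '' {μ : StrongDual ℝ L | μ ∈ V ∧ μ ≠ 0})

/-- `IsWDpair W_G G φ w` says that `φ ∈ 𝐖_D` with `D φ = w`, i.e. the abstract Stokes formula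
`⟨φ, G u⟩ + ⟨w, u⟩ = 0` holds for all `u ∈ W_G`. -/
def IsWDpair (WG : Submodule ℝ L) (G : ↥WG →ₗ[ℝ] Lv) (φ : StrongDual ℝ Lv) (w : StrongDual ℝ L) : Prop :=
  ∀ u : ↥WG, φ (G u) + w (u : L) = 0

/-- A gradient discretisation `𝒟 = (X_𝒟, P_𝒟, G_𝒟)`: a finite-dimensional real vector space
`X`, a function reconstruction `P : X → L` and a gradient reconstruction `Gd : X → Lv`, such
that `v ↦ (|P v|_{L,V}^p + ‖Gd v‖^p)^{1/p}` is a norm on `X` (definiteness is the only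
non-automatic condition). -/
structure GradDisc (L Lv : Type*) [NormedAddCommGroup L] [NormedSpace ℝ L]
    [NormedAddCommGroup Lv] [NormedSpace ℝ Lv]
    (V : Submodule ℝ (StrongDual ℝ L)) (p : ℝ) where
  X : Type
  [instAddCommGroup : AddCommGroup X]
  [instModule : Module ℝ X]
  [instFin : FiniteDimensional ℝ X]
  P : X →ₗ[ℝ] L
  Gd : X →ₗ[ℝ] Lv
  dnorm_definite : ∀ v : X, (semV V (P v) ^ p + ‖Gd v‖ ^ p) ^ (1 / p) = 0 → v = 0

attribute [instance] GradDisc.instAddCommGroup GradDisc.instModule GradDisc.instFin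

namespace GradDisc

variable {V : Submodule ℝ (StrongDual ℝ L)} {p : ℝ}

/-- The discrete norm `‖v‖_𝒟 = (|P_𝒟 v|_{L,V}^p + ‖G_𝒟 v‖_Lv^p)^{1/p}`. -/
noncomputable def dnorm (D : GradDisc L Lv V p) (v : D.X) : ℝ :=
  (semV V (D.P v) ^ p + ‖D.Gd v‖ ^ p) ^ (1 / p)

/-- `C_𝒟 = max_{v ≠ 0} ‖P_𝒟 v‖_L / ‖v‖_𝒟`. -/
noncomputable def CD (D : GradDisc L Lv V p) : ℝ :=
  sSup ((fun v : D.X => ‖D.P v‖ / D.dnorm v) '' {v : D.X | v ≠ 0})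

/-- `W_𝒟(φ) = sup_{u ≠ 0} |⟨φ, G_𝒟 u⟩ + ⟨D φ, P_𝒟 u⟩| / ‖u‖_𝒟`, where `w = D φ`. -/
noncomputable def WDdef (D : GradDisc L Lv V p) (φ : StrongDual ℝ Lv) (w : StrongDual ℝ L) : ℝ :=
  sSup ((fun u : D.X => |φ (D.Gd u) + w (D.P u)| / D.dnorm u) '' {u : D.X | u ≠ 0})

/-- `S_𝒟(φ) = min_v (‖P_𝒟 v − φ‖_L + ‖G_𝒟 v − G φ‖_Lv)`, where `gφ = G φ`. -/
noncomputable def SDdef (D : GradDisc L Lv V p) (φ : L) (gφ : Lv) : ℝ :=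
  sInf (Set.range fun v : D.X => ‖D.P v - φ‖ + ‖D.Gd v - gφ‖)

end GradDisc

/-- Coercivity of a sequence of gradient discretisations: `sup_m C_{𝒟_m} < ∞`. -/
def Coercive {V : Submodule ℝ (StrongDual ℝ L)} {p : ℝ} (D : ℕ → GradDisc L Lv V p) : Prop :=
  ∃ C : ℝ, ∀ m : ℕ, (D m).CD ≤ C

/-- Limit-conformity: `W_{𝒟_m}(φ) → 0` for every `φ ∈ 𝐖_D` (with `w = D φ`). -/
def LimitConforming (WG : Submodule ℝ L) (G : ↥WG →ₗ[ℝ] Lv)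
    {V : Submodule ℝ (StrongDual ℝ L)} {p : ℝ} (D : ℕ → GradDisc L Lv V p) : Prop :=
  ∀ (φ : StrongDual ℝ Lv) (w : StrongDual ℝ L), IsWDpair WG G φ w →
    Filter.Tendsto (fun m => (D m).WDdef φ w) Filter.atTop (𝓝 0)

/-- Consistency: `S_{𝒟_m}(φ) → 0` for every `φ ∈ W_G`. -/
def Consistent (WG : Submodule ℝ L) (G : ↥WG →ₗ[ℝ] Lv)
    {V : Submodule ℝ (StrongDual ℝ L)} {p : ℝ} (D : ℕ → GradDisc L Lv V p) : Prop :=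
  ∀ u : ↥WG, Filter.Tendsto (fun m => (D m).SDdef (u : L) (G u)) Filter.atTop (𝓝 0)

/-- Compactness: bounded discrete sequences have relatively compact reconstructions in `L`. -/
def CompactSeq {V : Submodule ℝ (StrongDual ℝ L)} {p : ℝ} (D : ℕ → GradDisc L Lv V p) : Prop :=
  ∀ u : (m : ℕ) → (D m).X, (∃ C : ℝ, ∀ m : ℕ, (D m).dnorm (u m) ≤ C) →
    IsCompact (closure (Set.range fun m => (D m).P (u m)))


private lemma aux_le_rpow {p : ℝ} (hp : 0 < p) {a b : ℝ} (ha : 0 ≤ a) (hb : 0 ≤ b) :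
    a ≤ (a ^ p + b ^ p) ^ (1 / p) := by
  have h1 : a = (a ^ p) ^ (1 / p) := by
    rw [← Real.rpow_mul ha, mul_one_div, div_self hp.ne', Real.rpow_one]
  nth_rewrite 1 [h1]
  exact Real.rpow_le_rpow (Real.rpow_nonneg ha p)
    (le_add_of_nonneg_right (Real.rpow_nonneg hb p)) (by positivity)

private lemma aux_le_rpow' {p : ℝ} (hp : 0 < p) {a b : ℝ} (ha : 0 ≤ a) (hb : 0 ≤ b) :
    b ≤ (a ^ p + b ^ p) ^ (1 / p) := by
  rw [add_comm]; exact aux_le_rpow hp hb ha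

private lemma semV_nonneg (V : Submodule ℝ (StrongDual ℝ L)) (u : L) : 0 ≤ semV V u :=
  Real.sSup_nonneg (by rintro x ⟨μ, _, rfl⟩; positivity)

private lemma dnorm_nonneg' {V : Submodule ℝ (StrongDual ℝ L)} {p : ℝ}
    (D : GradDisc L Lv V p) (v : D.X) : 0 ≤ D.dnorm v := by
  have h := semV_nonneg V (D.P v)
  unfold GradDisc.dnorm
  positivity

theorem galerkin_gradsDisc_properties
    [CompleteSpace L] [CompleteSpace Lv]
    [TopologicalSpace.SeparableSpace L] [TopologicalSpace.SeparableSpace Lv]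
    (hreflL : Function.Surjective ⇑(inclusionInDoubleDual ℝ L))
    (hreflLv : Function.Surjective ⇑(inclusionInDoubleDual ℝ Lv))
    (WG : Submodule ℝ L) (hWGdense : Dense (WG : Set L))
    (G : ↥WG →ₗ[ℝ] Lv)
    (hGclosed : IsClosed (Set.range fun u : ↥WG => ((u : L), G u)))
    (p : ℝ) (hp : 1 < p)
    (V : Submodule ℝ (StrongDual ℝ L)) (hVclosed : IsClosed (V : Set (StrongDual ℝ L)))
    (CWGV : ℝ) (hCWGV : 0 < CWGV)
    (hequiv : ∀ u : ↥WG, (‖(u : L)‖ ^ p + ‖G u‖ ^ p) ^ (1 / p) ≤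
      CWGV * (semV V (u : L) ^ p + ‖G u‖ ^ p) ^ (1 / p))
    (useq : ℕ → ↥WG)
    (hdenseWG : ∀ v : ↥WG, ∀ ε : ℝ, 0 < ε → ∃ i : ℕ,
      (‖(v : L) - (useq i : L)‖ ^ p + ‖G v - G (useq i)‖ ^ p) ^ (1 / p) < ε)
    (D : ℕ → GradDisc L Lv V p)
    (j : ∀ m : ℕ, (D m).X →ₗ[ℝ] ↥WG)
    (hjinj : ∀ m : ℕ, Function.Injective (j m))
    (hjP : ∀ (m : ℕ) (v : (D m).X), (D m).P v = ((j m v : ↥WG) : L))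
    (hjG : ∀ (m : ℕ) (v : (D m).X), (D m).Gd v = G (j m v))
    (hjrange : ∀ m : ℕ, LinearMap.range (j m) = Submodule.span ℝ (useq '' {i : ℕ | i ≤ m})) :
    Coercive D ∧ LimitConforming WG G D ∧ Consistent WG G D ∧
      ((∀ w : ℕ → ↥WG,
          (∃ C : ℝ, ∀ n : ℕ, (‖(w n : L)‖ ^ p + ‖G (w n)‖ ^ p) ^ (1 / p) ≤ C) →
          ∃ φ : ℕ → ℕ, StrictMono φ ∧ ∃ l : L,
            Tendsto (fun k => ((w (φ k) : L))) atTop (𝓝 l)) →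
        CompactSeq D) := by
  have hp0 : (0:ℝ) < p := lt_trans one_pos hp
  have hbound : ∀ (m : ℕ) (v : (D m).X),
      (‖((j m v : ↥WG) : L)‖ ^ p + ‖G (j m v)‖ ^ p) ^ (1/p) ≤ CWGV * (D m).dnorm v := by
    intro m v
    have h := hequiv (j m v)
    unfold GradDisc.dnorm
    rw [hjP, hjG]
    exact h
  have hdnpos : ∀ (m : ℕ) (v : (D m).X), v ≠ 0 → 0 < (D m).dnorm v := by
    intro m v hv
    rcases lt_or_eq_of_le (dnorm_nonneg' (D m) v) with h | h
    · exact h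
    · exact absurd ((D m).dnorm_definite v h.symm) hv
  refine ⟨⟨CWGV, fun m => Real.sSup_le ?_ hCWGV.le⟩, ?_, ?_, ?_⟩
  · rintro x ⟨v, hv, rfl⟩
    rw [div_le_iff₀ (hdnpos m v hv)]
    calc ‖(D m).P v‖ = ‖((j m v : ↥WG) : L)‖ := by rw [hjP]
      _ ≤ (‖((j m v : ↥WG) : L)‖ ^ p + ‖G (j m v)‖ ^ p) ^ (1/p) :=
          aux_le_rpow hp0 (norm_nonneg _) (norm_nonneg _)
      _ ≤ CWGV * (D m).dnorm v := hbound m v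
  · -- limit-conformity
    intro φ w hφw
    have hz : ∀ m, (D m).WDdef φ w = 0 := by
      intro m
      have hsub : ((fun u : (D m).X => |φ ((D m).Gd u) + w ((D m).P u)| / (D m).dnorm u) ''
          {u : (D m).X | u ≠ 0}) ⊆ {0} := by
        rintro x ⟨u, hu, rfl⟩
        have h0 : φ ((D m).Gd u) + w ((D m).P u) = 0 := by
          rw [hjP, hjG]; exact hφw (j m u)
        simp [h0]
      unfold GradDisc.WDdef
      rcases Set.subset_singleton_iff_eq.1 hsub with h | h
      · rw [h]; exact Real.sSup_empty
      · rw [h]; exact csSup_singleton 0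
    simp only [hz]
    exact tendsto_const_nhds
  · -- consistency
    intro u
    rw [Metric.tendsto_atTop]
    intro ε hε
    obtain ⟨i, hi⟩ := hdenseWG u (ε/2) (by positivity)
    refine ⟨i, fun m hm => ?_⟩
    have hmem : useq i ∈ LinearMap.range (j m) := by
      rw [hjrange m]
      exact Submodule.subset_span ⟨i, hm, rfl⟩
    obtain ⟨v, hv⟩ := hmem
    have hnonneg : ∀ x ∈ (Set.range fun v' : (D m).X =>
        ‖(D m).P v' - ((u : ↥WG) : L)‖ + ‖(D m).Gd v' - G u‖), 0 ≤ x := by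
      rintro x ⟨v', rfl⟩; positivity
    have hSDnn : 0 ≤ (D m).SDdef ((u : ↥WG) : L) (G u) := Real.sInf_nonneg hnonneg
    have hle : (D m).SDdef ((u : ↥WG) : L) (G u) ≤
        ‖(D m).P v - ((u : ↥WG) : L)‖ + ‖(D m).Gd v - G u‖ :=
      csInf_le ⟨0, fun x hx => hnonneg x hx⟩ ⟨v, rfl⟩
    rw [Real.dist_eq, sub_zero, abs_of_nonneg hSDnn]
    have e1 : (D m).P v - ((u : ↥WG) : L) = -(((u : ↥WG) : L) - (useq i : L)) := by
      rw [hjP m v, hv, neg_sub]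
    have e2 : (D m).Gd v - G u = -(G u - G (useq i)) := by
      rw [hjG m v, hv, neg_sub]
    have key1 : ‖((u : ↥WG) : L) - (useq i : L)‖ ≤
        (‖((u : ↥WG) : L) - (useq i : L)‖ ^ p + ‖G u - G (useq i)‖ ^ p) ^ (1/p) :=
      aux_le_rpow hp0 (norm_nonneg _) (norm_nonneg _)
    have key2 : ‖G u - G (useq i)‖ ≤
        (‖((u : ↥WG) : L) - (useq i : L)‖ ^ p + ‖G u - G (useq i)‖ ^ p) ^ (1/p) :=
      aux_le_rpow' hp0 (norm_nonneg _) (norm_nonneg _)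
    calc (D m).SDdef ((u : ↥WG) : L) (G u)
        ≤ ‖(D m).P v - ((u : ↥WG) : L)‖ + ‖(D m).Gd v - G u‖ := hle
      _ = ‖((u : ↥WG) : L) - (useq i : L)‖ + ‖G u - G (useq i)‖ := by
          rw [e1, e2, norm_neg, norm_neg]
      _ < ε/2 + ε/2 := add_lt_add (lt_of_le_of_lt key1 hi) (lt_of_le_of_lt key2 hi)
      _ = ε := by ring
  · -- compactness
    rintro hcomp u ⟨C, hC⟩
    have hseq : IsSeqCompact (closure (Set.range fun m => (D m).P (u m))) := by
      intro y hy
      have hchoice : ∀ n : ℕ, ∃ m : ℕ,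
          dist (y n) ((D m).P (u m)) < 1/((n : ℝ)+1) := by
        intro n
        obtain ⟨b, ⟨m, rfl⟩, hb⟩ :=
          Metric.mem_closure_iff.1 (hy n) (1/((n : ℝ)+1)) (by positivity)
        exact ⟨m, hb⟩
      choose f hf using hchoice
      obtain ⟨φ, hφ, l, hl⟩ := hcomp (fun n => j (f n) (u (f n)))
        ⟨CWGV * C, fun n => le_trans (hbound (f n) (u (f n)))
          (mul_le_mul_of_nonneg_left (hC (f n)) hCWGV.le)⟩
      have hl' : Tendsto (fun k => (D (f (φ k))).P (u (f (φ k)))) atTop (𝓝 l) := by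
        simpa only [hjP] using hl
      have h2 : Tendsto (fun k => dist ((D (f (φ k))).P (u (f (φ k)))) l) atTop (𝓝 0) :=
        tendsto_iff_dist_tendsto_zero.1 hl'
      have h1 : Tendsto (fun k => dist (y (φ k)) ((D (f (φ k))).P (u (f (φ k))))) atTop (𝓝 0) := by
        apply squeeze_zero (fun k => dist_nonneg) (g := fun k : ℕ => 1/((k : ℝ)+1))
        · intro k
          refine le_trans (hf (φ k)).le ?_
          apply one_div_le_one_div_of_le (by positivity)
          have := hφ.le_apply (x := k)
          push_cast
          exact_mod_cast add_le_add (Nat.cast_le.2 this) (le_refl _)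
        · exact tendsto_one_div_add_atTop_nhds_zero_nat
      have hdist : Tendsto (fun k => dist (y (φ k)) l) atTop (𝓝 0) := by
        apply squeeze_zero (fun k => dist_nonneg)
          (g := fun k => dist (y (φ k)) ((D (f (φ k))).P (u (f (φ k)))) +
            dist ((D (f (φ k))).P (u (f (φ k)))) l)
        · intro k; exact dist_triangle _ _ _
        · simpa using h1.add h2
      have hlmem : l ∈ closure (Set.range fun m => (D m).P (u m)) :=
        isClosed_closure.mem_of_tendsto hl'
          (Filter.Eventually.of_forall fun k => subset_closure ⟨f (φ k), rfl⟩)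
      exact ⟨l, hlmem, φ, hφ, tendsto_iff_dist_tendsto_zero.2 hdist⟩
    exact hseq.isCompact
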